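/- Let Ω ⊆ ℝ be open and forward invariant under F ∈ C¹(Ω), h ∈ C(Ω), 1 ≤ p < ∞, ρ : Ω → (0,∞) measurable. For x ∈ Ω with F(x) ≠ 0 let C(x) denote the connected component of Ω \ {F = 0} containing x, and let ρ_{t,p} be defined as in the paper (via the semiflow φ). Then ∫_ℝ ρ_{t,p}(x) dt = (1/|F(x)|) ∫_{C(x)} exp(p ∫_w^x Re h(y)/F(y) dy) ρ(w) dw. -/

import Mathlib

open Set MeasureTheory Topology Filter

theorem lintegral_image_eq_lintegral_abs_deriv_mul' {s : Set ℝ} {f f' : ℝ → ℝ}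
    (hs : MeasurableSet s) (hf' : ∀ x ∈ s, HasDerivWithinAt f (f' x) s x)
    (hf : InjOn f s) (g : ℝ → ENNReal) :
    ∫⁻ x in f '' s, g x = ∫⁻ x in s, ENNReal.ofReal |f' x| * g (f x) := by
  simpa only [ContinuousLinearMap.det_toSpanSingleton] using
    lintegral_image_eq_lintegral_abs_det_fderiv_mul volume hs
      (fun x hx => (hf' x hx).hasFDerivWithinAt) hf g

/-- For `x ∈ Ω` with `F(x) ≠ 0`,
`∫_ℝ ρ_{t,p}(x) dt = |F(x)|⁻¹ ∫_{C(x)} exp(p ∫_w^x Re h(y)/F(y) dy) ρ(w) dw`,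
where `C(x)` is the connected component of `Ω \ {F = 0}` containing `x` and the
family `ρt` is determined by:
`ρ_{t,p}(φ(t,y)) = exp(∫₀ᵗ [p Re h(φ(s,y)) − F'(φ(s,y))] ds) ρ(y)` and
`ρ_{t,p} = 0` off `φ(t,Ω)` for `t ≥ 0`, and
`ρ_{−t,p}(y) = exp(−p ∫₀ᵗ Re h(φ(s,y)) ds) exp(∫₀ᵗ F'(φ(s,y)) ds) ρ(φ(t,y))`. -/
theorem integral_over_time_eq_component_integral (Ω : Set ℝ) (hΩ : IsOpen Ω)
    (F : ℝ → ℝ) (hF : ContDiffOn ℝ 1 F Ω) (hF'c : ContinuousOn (deriv F) Ω)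
    (h : ℝ → ℂ) (hh : ContinuousOn h Ω)
    (ρ : ℝ → ℝ) (hρm : Measurable ρ) (hρpos : ∀ y ∈ Ω, 0 < ρ y)
    (p : ℝ) (hp : 1 ≤ p)
    (φ : ℝ → ℝ → ℝ)
    (hφ0 : ∀ y ∈ Ω, φ 0 y = y)
    (hφΩ : ∀ y ∈ Ω, ∀ t : ℝ, 0 ≤ t → φ t y ∈ Ω)
    (hφ' : ∀ y ∈ Ω, ∀ t : ℝ, 0 ≤ t → HasDerivAt (fun s => φ s y) (F (φ t y)) t)
    (hsemi : ∀ y ∈ Ω, ∀ s t : ℝ, 0 ≤ s → 0 ≤ t → φ (t + s) y = φ t (φ s y))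
    (ρt : ℝ → ℝ → ℝ)
    (hρt_pos : ∀ t : ℝ, 0 ≤ t → ∀ y ∈ Ω,
      ρt t (φ t y) =
        Real.exp (∫ s in (0:ℝ)..t, p * (h (φ s y)).re - deriv F (φ s y)) * ρ y)
    (hρt_out : ∀ t : ℝ, 0 ≤ t → ∀ y : ℝ, y ∉ φ t '' Ω → ρt t y = 0)
    (hρt_neg : ∀ t : ℝ, 0 ≤ t → ∀ y ∈ Ω,
      ρt (-t) y =
        Real.exp (-(p * ∫ s in (0:ℝ)..t, (h (φ s y)).re)) *
          Real.exp (∫ s in (0:ℝ)..t, deriv F (φ s y)) * ρ (φ t y))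
    (x : ℝ) (hx : x ∈ Ω) (hFx : F x ≠ 0) :
    ∫⁻ t : ℝ, ENNReal.ofReal (ρt t x)
      = ENNReal.ofReal (1 / |F x|) *
        ∫⁻ w in connectedComponentIn (Ω \ {y | F y = 0}) x,
          ENNReal.ofReal (Real.exp (p * ∫ y in w..x, (h y).re / F y) * ρ w) := by
  classical
  set Z : Set ℝ := Ω \ {y | F y = 0} with hZdef
  have hFc : ContinuousOn F Ω := hF.continuousOn
  have hZopen : IsOpen Z := by
    have hZ' : Z = Ω ∩ F ⁻¹' ({0}ᶜ) := by
      ext y; simp [hZdef, mem_preimage, Set.mem_diff, mem_setOf_eq]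
    rw [hZ']
    exact hFc.isOpen_inter_preimage hΩ isOpen_compl_singleton
  have hFd : ∀ y ∈ Ω, HasDerivAt F (deriv F y) y := fun y hy =>
    ((hF.differentiableOn one_ne_zero).differentiableAt (hΩ.mem_nhds hy)).hasDerivAt
  have hucont : ∀ y ∈ Ω, ContinuousOn (fun s => φ s y) (Ici 0) := fun y hy s hs =>
    ((hφ' y hy s hs).continuousAt).continuousWithinAt
  -- Liouville formula along orbits
  have hLiou : ∀ y ∈ Ω, ∀ t : ℝ, 0 ≤ t →
      F (φ t y) = F y * Real.exp (∫ s in (0:ℝ)..t, deriv F (φ s y)) := by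
    intro y hy t ht
    set G : ℝ → ℝ := fun s => deriv F (φ s y) with hGdef
    have horb : ∀ s : ℝ, 0 ≤ s → φ s y ∈ Ω := fun s hs => hφΩ y hy s hs
    have hGcont : ContinuousOn G (Ici 0) :=
      hF'c.comp (hucont y hy) fun s hs => horb s hs
    have hGint : ∀ s : ℝ, 0 ≤ s → IntervalIntegrable G volume 0 s := fun s hs =>
      (hGcont.mono (by rw [uIcc_of_le hs]; exact Icc_subset_Ici_self)).intervalIntegrable
    set A : ℝ → ℝ := fun s => ∫ r in (0:ℝ)..s, G r with hAdef
    have hAcont : ContinuousOn A (Icc 0 t) := by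
      have hint : IntegrableOn G (uIcc 0 t) volume := by
        rw [uIcc_of_le ht]
        exact (hGcont.mono Icc_subset_Ici_self).integrableOn_Icc
      have := intervalIntegral.continuousOn_primitive_interval hint
      rwa [uIcc_of_le ht] at this
    have hAderiv : ∀ s ∈ Ico 0 t, HasDerivWithinAt A (G s) (Ici s) s := by
      intro s hs
      have hmem : Ici (0:ℝ) ∈ 𝓝[>] s := Filter.mem_of_superset self_mem_nhdsWithin
        fun z hz => le_trans hs.1 (le_of_lt hz)
      exact intervalIntegral.integral_hasDerivWithinAt_right (hGint s hs.1)
        ⟨Ici 0, hmem, hGcont.aestronglyMeasurable measurableSet_Ici⟩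
        ((hGcont s hs.1).mono fun z hz => le_trans hs.1 (le_of_lt hz))
    have hVcont : ContinuousOn (fun s => F (φ s y) * Real.exp (-A s)) (Icc 0 t) := by
      refine ContinuousOn.mul ?_ (Real.continuous_exp.comp_continuousOn hAcont.neg)
      exact hFc.comp ((hucont y hy).mono Icc_subset_Ici_self) fun s hs => horb s hs.1
    have hVderiv : ∀ s ∈ Ico 0 t,
        HasDerivWithinAt (fun s => F (φ s y) * Real.exp (-A s)) 0 (Ici s) s := by
      intro s hs
      have h1 : HasDerivWithinAt (fun s => F (φ s y)) (G s * F (φ s y)) (Ici s) s := by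
        have := (hFd _ (horb s hs.1)).comp_hasDerivWithinAt_of_eq s
          ((hφ' y hy s hs.1).hasDerivWithinAt (s := Ici s)) rfl
        exact this
      have h2 : HasDerivWithinAt (fun s => Real.exp (-A s))
          (Real.exp (-A s) * -G s) (Ici s) s := (hAderiv s hs).neg.exp
      have h3 : HasDerivWithinAt (fun s => F (φ s y) * Real.exp (-A s))
          (G s * F (φ s y) * Real.exp (-A s) + F (φ s y) * (Real.exp (-A s) * -G s)) (Ici s) s :=
        h1.mul h2
      convert h3 using 1
      ring
    have key := constant_of_has_deriv_right_zero hVcont hVderiv t (right_mem_Icc.2 ht)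
    have hA0 : A 0 = 0 := intervalIntegral.integral_same
    have hV0 : F (φ 0 y) * Real.exp (-A 0) = F y := by
      rw [hφ0 y hy, hA0, neg_zero, Real.exp_zero, mul_one]
    rw [hV0] at key
    have hE : Real.exp (-A t) * Real.exp (A t) = 1 := by
      rw [← Real.exp_add]; simp
    calc F (φ t y) = F (φ t y) * (Real.exp (-A t) * Real.exp (A t)) := by
          rw [hE, mul_one]
      _ = F (φ t y) * Real.exp (-A t) * Real.exp (A t) := by ring
      _ = F y * Real.exp (A t) := by rw [key]
  -- the connected component
  have hxZ : x ∈ Z := ⟨hx, hFx⟩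
  set C : Set ℝ := connectedComponentIn Z x with hCdef
  have hCopen : IsOpen C := hZopen.connectedComponentIn
  have hCsub : C ⊆ Z := connectedComponentIn_subset Z x
  have hxC : x ∈ C := mem_connectedComponentIn hxZ
  have hCΩ : ∀ w ∈ C, w ∈ Ω := fun w hw => (hCsub hw).1
  have hCF : ∀ w ∈ C, F w ≠ 0 := fun w hw => (hCsub hw).2
  have hCord : OrdConnected C := isPreconnected_connectedComponentIn.ordConnected
  have hCconv : Convex ℝ C := convex_iff_ordConnected.2 hCord
  have hCmeas : MeasurableSet C := hCopen.measurableSet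
  -- orbits starting in C stay in C
  have horbC : ∀ y ∈ C, ∀ t : ℝ, 0 ≤ t → φ t y ∈ C := by
    intro y hy t ht
    have hyΩ := hCΩ y hy
    have hKpre : IsPreconnected ((fun s => φ s y) '' Icc 0 t) :=
      isPreconnected_Icc.image _ ((hucont y hyΩ).mono Icc_subset_Ici_self)
    have hKZ : (fun s => φ s y) '' Icc 0 t ⊆ Z := by
      rintro _ ⟨s, hs, rfl⟩
      refine ⟨hφΩ y hyΩ s hs.1, ?_⟩
      simp only [mem_setOf_eq]
      rw [hLiou y hyΩ s hs.1]
      exact mul_ne_zero (hCF y hy) (Real.exp_ne_zero _)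
    have hyK : y ∈ (fun s => φ s y) '' Icc 0 t := ⟨0, ⟨le_rfl, ht⟩, hφ0 y hyΩ⟩
    have hsub : (fun s => φ s y) '' Icc 0 t ⊆ connectedComponentIn Z y :=
      hKpre.subset_connectedComponentIn hyK hKZ
    have hcc : connectedComponentIn Z x = connectedComponentIn Z y :=
      connectedComponentIn_eq hy
    rw [hCdef, hcc]
    exact hsub ⟨t, ⟨ht, le_rfl⟩, rfl⟩
  -- the time map τ
  set τ : ℝ → ℝ := fun w => ∫ y in x..w, (F y)⁻¹ with hτdef
  have hτx : τ x = 0 := intervalIntegral.integral_same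
  have hFinv : ContinuousOn (fun y => (F y)⁻¹) C :=
    (hFc.mono fun w hw => hCΩ w hw).inv₀ hCF
  have hτderiv : ∀ w ∈ C, HasDerivAt τ (F w)⁻¹ w := by
    intro w hw
    refine intervalIntegral.integral_hasDerivAt_right ?_ ?_ ?_
    · exact (hFinv.mono (hCord.uIcc_subset hxC hw)).intervalIntegrable
    · exact ⟨C, hCopen.mem_nhds hw, hFinv.aestronglyMeasurable hCmeas⟩
    · exact (hFinv w hw).continuousAt (hCopen.mem_nhds hw)
  have hτcont : ContinuousOn τ C := fun w hw =>
    (hτderiv w hw).continuousAt.continuousWithinAt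
  -- τ translates time
  have hτφ : ∀ y ∈ C, ∀ t : ℝ, 0 ≤ t → τ (φ t y) = τ y + t := by
    intro y hy t ht
    have hyΩ := hCΩ y hy
    have hWc : ContinuousOn (fun s => τ (φ s y) - s) (Icc 0 t) := by
      refine ContinuousOn.sub ?_ continuousOn_id
      exact hτcont.comp ((hucont y hyΩ).mono Icc_subset_Ici_self)
        fun s hs => horbC y hy s hs.1
    have hWd : ∀ s ∈ Ico 0 t,
        HasDerivWithinAt (fun s => τ (φ s y) - s) 0 (Ici s) s := by
      intro s hs
      have h1 : HasDerivWithinAt (fun s => τ (φ s y))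
          ((F (φ s y))⁻¹ * F (φ s y)) (Ici s) s := by
        have := (hτderiv _ (horbC y hy s hs.1)).comp_hasDerivWithinAt_of_eq s
          ((hφ' y hyΩ s hs.1).hasDerivWithinAt (s := Ici s)) rfl
        exact this
      have h2 := h1.sub (hasDerivWithinAt_id s (Ici s))
      have h3 : (F (φ s y))⁻¹ * F (φ s y) - 1 = 0 := by
        rw [inv_mul_cancel₀ (hCF _ (horbC y hy s hs.1))]; ring
      rwa [h3] at h2
    have key := constant_of_has_deriv_right_zero hWc hWd t (right_mem_Icc.2 ht)
    have h0 : τ (φ 0 y) - 0 = τ y := by rw [hφ0 y hyΩ]; ring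
    rw [h0] at key
    linarith [key]
  -- sign of F on C, monotonicity of τ
  have hsign : (∀ w ∈ C, 0 < F w) ∨ (∀ w ∈ C, F w < 0) := by
    by_contra hcon
    push_neg at hcon
    obtain ⟨⟨w1, hw1, hw1'⟩, w2, hw2, hw2'⟩ := hcon
    have hFw1 : F w1 ≤ 0 := hw1'
    have hFw2 : 0 ≤ F w2 := hw2'
    have hcontu : ContinuousOn F (uIcc w1 w2) :=
      hFc.mono ((hCord.uIcc_subset hw1 hw2).trans fun w hw => hCΩ w hw)
    have h0mem : (0:ℝ) ∈ uIcc (F w1) (F w2) := by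
      rw [mem_uIcc]; left; exact ⟨hFw1, hFw2⟩
    obtain ⟨z, hz, hz0⟩ := intermediate_value_uIcc hcontu h0mem
    exact hCF z (hCord.uIcc_subset hw1 hw2 hz) hz0
  have hmono : StrictMonoOn τ C ∨ StrictAntiOn τ C := by
    rcases hsign with hpos | hneg
    · left
      refine strictMonoOn_of_deriv_pos hCconv hτcont fun w hw => ?_
      rw [hCopen.interior_eq] at hw
      rw [(hτderiv w hw).deriv]
      exact inv_pos.2 (hpos w hw)
    · right
      refine strictAntiOn_of_deriv_neg hCconv hτcont fun w hw => ?_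
      rw [hCopen.interior_eq] at hw
      rw [(hτderiv w hw).deriv]
      exact inv_lt_zero.2 (hneg w hw)
  have hτinj : InjOn τ C := by
    rcases hmono with hm | hm
    exacts [hm.injOn, hm.injOn]
  -- the two halves of C
  set Cm : Set ℝ := {w ∈ C | τ w ≤ 0} with hCmdef
  set Cp : Set ℝ := {w ∈ C | 0 ≤ τ w} with hCpdef
  have hCm_eq : Cm = C ∩ Iic x ∨ Cm = C ∩ Ici x := by
    rcases hmono with hm | hm
    · left
      ext w
      simp only [hCmdef, mem_sep_iff, mem_inter_iff, mem_Iic]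
      refine and_congr_right fun hw => ⟨fun hτw => ?_, fun hle => ?_⟩
      · by_contra hlt
        push_neg at hlt
        have := hm hxC hw hlt
        rw [hτx] at this
        linarith
      · rcases eq_or_lt_of_le hle with rfl | hlt
        · rw [hτx]
        · have := hm hw hxC hlt
          rw [hτx] at this
          linarith
    · right
      ext w
      simp only [hCmdef, mem_sep_iff, mem_inter_iff, mem_Ici]
      refine and_congr_right fun hw => ⟨fun hτw => ?_, fun hle => ?_⟩
      · by_contra hlt
        push_neg at hlt
        have := hm hw hxC hlt
        rw [hτx] at this
        linarith
      · rcases eq_or_lt_of_le hle with rfl | hlt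
        · rw [hτx]
        · have := hm hxC hw hlt
          rw [hτx] at this
          linarith
  have hCm_meas : MeasurableSet Cm := by
    rcases hCm_eq with h' | h' <;> rw [h']
    exacts [hCmeas.inter measurableSet_Iic, hCmeas.inter measurableSet_Ici]
  have hCm_conv : Convex ℝ Cm := by
    rcases hCm_eq with h' | h' <;> rw [h']
    exacts [hCconv.inter (convex_Iic x), hCconv.inter (convex_Ici x)]
  have hCp_meas : MeasurableSet Cp := by
    have : Cp = C ∩ Iic x ∨ Cp = C ∩ Ici x := by
      rcases hmono with hm | hm
      · right
        ext w
        simp only [hCpdef, mem_sep_iff, mem_inter_iff, mem_Ici]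
        refine and_congr_right fun hw => ⟨fun hτw => ?_, fun hle => ?_⟩
        · by_contra hlt
          push_neg at hlt
          have := hm hw hxC hlt
          rw [hτx] at this
          linarith
        · rcases eq_or_lt_of_le hle with rfl | hlt
          · rw [hτx]
          · have := hm hxC hw hlt
            rw [hτx] at this
            linarith
      · left
        ext w
        simp only [hCpdef, mem_sep_iff, mem_inter_iff, mem_Iic]
        refine and_congr_right fun hw => ⟨fun hτw => ?_, fun hle => ?_⟩
        · by_contra hlt
          push_neg at hlt
          have := hm hxC hw hlt
          rw [hτx] at this
          linarith
        · rcases eq_or_lt_of_le hle with rfl | hlt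
          · rw [hτx]
          · have := hm hw hxC hlt
            rw [hτx] at this
            linarith
    rcases this with h' | h' <;> rw [h']
    exacts [hCmeas.inter measurableSet_Iic, hCmeas.inter measurableSet_Ici]
  -- the backward time map σ and the reachable-time set S
  set σf : ℝ → ℝ := fun w => -τ w with hσdef
  set S : Set ℝ := σf '' Cm with hSdef
  have hxCm : x ∈ Cm := ⟨hxC, by rw [hτx]⟩
  have hφσ : ∀ w ∈ Cm, φ (σf w) w = x := by
    intro w hw
    have hσnn : 0 ≤ σf w := neg_nonneg.2 hw.2
    have h1 : τ (φ (σf w) w) = τ w + σf w := hτφ w hw.1 _ hσnn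
    have h2 : τ (φ (σf w) w) = τ x := by rw [h1, hτx, hσdef]; ring
    exact hτinj (horbC w hw.1 _ hσnn) hxC h2
  have hSsub : S ⊆ Ici 0 := by
    rintro _ ⟨w, hw, rfl⟩
    exact neg_nonneg.2 hw.2
  have hSmeas : MeasurableSet S := by
    have hpre : IsPreconnected Cm := hCm_conv.isPreconnected
    have hcont : ContinuousOn σf Cm := (hτcont.mono fun w hw => hw.1).neg
    exact ((hpre.image σf hcont).ordConnected).measurableSet
  -- vanishing of ρt off S
  have hvanish : ∀ t ∈ Ici (0:ℝ) \ S, ρt t x = 0 := by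
    rintro t ⟨ht, htS⟩
    apply hρt_out t ht
    rintro ⟨y, hyΩ, hyx⟩
    have hL := hLiou y hyΩ t ht
    rw [hyx] at hL
    have hFy : F y ≠ 0 := by
      intro h0
      rw [h0, zero_mul] at hL
      exact hFx hL
    have hKZ : (fun s => φ s y) '' Icc 0 t ⊆ Z := by
      rintro _ ⟨s, hs, rfl⟩
      refine ⟨hφΩ y hyΩ s hs.1, ?_⟩
      simp only [mem_setOf_eq]
      rw [hLiou y hyΩ s hs.1]
      exact mul_ne_zero hFy (Real.exp_ne_zero _)
    have hKpre : IsPreconnected ((fun s => φ s y) '' Icc 0 t) :=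
      isPreconnected_Icc.image _ ((hucont y hyΩ).mono Icc_subset_Ici_self)
    have hxK : x ∈ (fun s => φ s y) '' Icc 0 t := ⟨t, ⟨ht, le_rfl⟩, hyx⟩
    have hsubC : (fun s => φ s y) '' Icc 0 t ⊆ C :=
      hKpre.subset_connectedComponentIn hxK hKZ
    have hyC : y ∈ C := hsubC ⟨0, ⟨le_rfl, ht⟩, hφ0 y hyΩ⟩
    have hτy : τ y + t = 0 := by
      have := hτφ y hyC t ht
      rw [hyx, hτx] at this
      linarith
    have ht' : (0:ℝ) ≤ t := ht
    have hyCm : y ∈ Cm := ⟨hyC, by show τ y ≤ 0; linarith⟩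
    exact htS ⟨y, hyCm, by show -τ y = t; linarith⟩
  -- substitution formula for the h-integral along orbits
  have hsubint : ∀ y ∈ C, ∀ t : ℝ, 0 ≤ t →
      (∫ s in (0:ℝ)..t, (h (φ s y)).re) = ∫ u in y..(φ t y), (h u).re / F u := by
    intro y hy t ht
    have hyΩ := hCΩ y hy
    have himgC : (fun s => φ s y) '' uIcc 0 t ⊆ C := by
      rw [uIcc_of_le ht]
      rintro _ ⟨s, hs, rfl⟩
      exact horbC y hy s hs.1
    have hfc : ContinuousOn (fun s => φ s y) (uIcc 0 t) := by
      rw [uIcc_of_le ht]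
      exact (hucont y hyΩ).mono Icc_subset_Ici_self
    have hff' : ∀ s ∈ Ioo (min 0 t) (max 0 t),
        HasDerivWithinAt (fun s => φ s y) (F (φ s y)) (Ioi s) s := by
      rw [min_eq_left ht, max_eq_right ht]
      intro s hs
      exact (hφ' y hyΩ s hs.1.le).hasDerivWithinAt
    have hf'c : ContinuousOn (fun s => F (φ s y)) (uIcc 0 t) :=
      hFc.comp hfc fun s hs => hCΩ _ (himgC (mem_image_of_mem _ hs))
    have hgc : ContinuousOn (fun u => (h u).re / F u)
        ((fun s => φ s y) '' uIcc 0 t) := by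
      refine ContinuousOn.div ?_ ?_ ?_
      · exact Complex.continuous_re.comp_continuousOn
          (hh.mono fun w hw => hCΩ w (himgC hw))
      · exact hFc.mono fun w hw => hCΩ w (himgC hw)
      · exact fun w hw => hCF w (himgC hw)
    have key := intervalIntegral.integral_comp_smul_deriv'' hfc hff' hf'c hgc
    rw [hφ0 y hyΩ] at key
    rw [← key]
    apply intervalIntegral.integral_congr
    intro s hs
    have hsC : φ s y ∈ C := himgC (mem_image_of_mem _ hs)
    simp only [Function.comp_apply, smul_eq_mul]
    rw [mul_div_assoc']
    exact (mul_div_cancel_left₀ _ (hCF _ hsC)).symm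
  -- exp of the divergence integral as a ratio of |F|
  have habs : ∀ y ∈ C, ∀ t : ℝ, 0 ≤ t →
      Real.exp (∫ s in (0:ℝ)..t, deriv F (φ s y)) = |F (φ t y)| / |F y| := by
    intro y hy t ht
    have h1 := hLiou y (hCΩ y hy) t ht
    have h2 : |F (φ t y)| = |F y| * Real.exp (∫ s in (0:ℝ)..t, deriv F (φ s y)) := by
      rw [h1, abs_mul, abs_of_pos (Real.exp_pos _)]
    rw [h2, mul_comm, mul_div_assoc, div_self (abs_ne_zero.2 (hCF y hy)), mul_one]
  -- the common integrand on C
  set Ψ : ℝ → ENNReal := fun w =>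
    ENNReal.ofReal ((1 / |F x|) *
      (Real.exp (p * ∫ y in w..x, (h y).re / F y) * ρ w)) with hΨdef
  -- the forward orbit map and its image
  have hg' : ∀ t ∈ Ici (0:ℝ), HasDerivWithinAt (fun t => φ t x) (F (φ t x)) (Ici 0) t :=
    fun t ht => (hφ' x hx t ht).hasDerivWithinAt
  have hτg : ∀ t : ℝ, 0 ≤ t → τ (φ t x) = t := by
    intro t ht
    rw [hτφ x hxC t ht, hτx, zero_add]
  have hginj : InjOn (fun t => φ t x) (Ici 0) := by
    intro a ha b hb hab
    have h1 := hτg a ha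
    have h2 := hτg b hb
    rw [← h1, ← h2]
    simp only at hab
    rw [hab]
  have hgimg : (fun t => φ t x) '' Ici 0 = Cp := by
    ext w
    constructor
    · rintro ⟨t, ht, rfl⟩
      exact ⟨horbC x hxC t ht, by rw [hτg t ht]; exact ht⟩
    · rintro ⟨hwC, hτw⟩
      refine ⟨τ w, hτw, ?_⟩
      exact hτinj (horbC x hxC _ hτw) hwC (hτg (τ w) hτw)
  -- pointwise identity for negative times
  have hBpoint : ∀ t ∈ Ici (0:ℝ), ENNReal.ofReal (ρt (-t) x)
      = ENNReal.ofReal |F (φ t x)| * Ψ (φ t x) := by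
    intro t ht
    have hρ := hρt_neg t ht x hx
    have hsub1 : (∫ s in (0:ℝ)..t, (h (φ s x)).re)
        = ∫ u in x..(φ t x), (h u).re / F u := hsubint x hxC t ht
    have habs1 : Real.exp (∫ s in (0:ℝ)..t, deriv F (φ s x)) = |F (φ t x)| / |F x| :=
      habs x hxC t ht
    have hA : (∫ u in x..(φ t x), (h u).re / F u)
        = -(∫ u in (φ t x)..x, (h u).re / F u) := intervalIntegral.integral_symm _ _
    have hval : ρt (-t) x = |F (φ t x)| *
        ((1 / |F x|) * (Real.exp (p * ∫ u in (φ t x)..x, (h u).re / F u) * ρ (φ t x))) := by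
      rw [hρ, hsub1, hA, habs1, mul_neg, neg_neg, div_eq_mul_one_div]
      ring
    rw [hval, ENNReal.ofReal_mul (abs_nonneg _)]
  -- Part B : negative times
  have hPartB : ∫⁻ t in Iio (0:ℝ), ENNReal.ofReal (ρt t x) = ∫⁻ w in Cp, Ψ w := by
    have hneg : ∫⁻ t in Ioi (0:ℝ), ENNReal.ofReal (ρt (-t) x)
        = ∫⁻ t in Iio (0:ℝ), ENNReal.ofReal (ρt t x) := by
      have hmp := (Measure.measurePreserving_neg (volume : Measure ℝ)).setLIntegral_comp_emb
        measurableEmbedding_neg (fun t => ENNReal.ofReal (ρt t x)) (Ioi 0)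
      rwa [show (Neg.neg '' Ioi (0:ℝ)) = Iio 0 by rw [image_neg_Ioi, neg_zero]] at hmp
    rw [← hneg, setLIntegral_congr Ioi_ae_eq_Ici,
      setLIntegral_congr_fun measurableSet_Ici hBpoint]
    have := lintegral_image_eq_lintegral_abs_deriv_mul' measurableSet_Ici hg' hginj Ψ
    rw [hgimg] at this
    exact this.symm
  -- Part A : nonnegative times
  have hArw : ∫⁻ t in Ici (0:ℝ), ENNReal.ofReal (ρt t x)
      = ∫⁻ t in S, ENNReal.ofReal (ρt t x) := by
    rw [← lintegral_indicator measurableSet_Ici, ← lintegral_indicator hSmeas]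
    congr 1
    ext t
    by_cases htS : t ∈ S
    · rw [indicator_of_mem htS, indicator_of_mem (hSsub htS)]
    · by_cases ht : t ∈ Ici (0:ℝ)
      · rw [indicator_of_mem ht, indicator_of_notMem htS, hvanish t ⟨ht, htS⟩,
          ENNReal.ofReal_zero]
      · rw [indicator_of_notMem ht, indicator_of_notMem htS]
  have hσderiv : ∀ w ∈ Cm, HasDerivWithinAt σf (-(F w)⁻¹) Cm w :=
    fun w hw => ((hτderiv w hw.1).neg).hasDerivWithinAt
  have hσinj : InjOn σf Cm := fun a ha b hb hab =>
    hτinj ha.1 hb.1 (neg_injective hab)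
  have hApoint : ∀ w ∈ Cm,
      ENNReal.ofReal |(-(F w)⁻¹)| * ENNReal.ofReal (ρt (σf w) x) = Ψ w := by
    intro w hw
    have hσnn : 0 ≤ σf w := neg_nonneg.2 hw.2
    have hwΩ := hCΩ w hw.1
    have hwC := hw.1
    have hρ := hρt_pos (σf w) hσnn w hwΩ
    rw [hφσ w hw] at hρ
    have hcφ : ContinuousOn (fun s => φ s w) (uIcc 0 (σf w)) := by
      rw [uIcc_of_le hσnn]
      exact (hucont w hwΩ).mono Icc_subset_Ici_self
    have hmaps : ∀ s ∈ uIcc (0:ℝ) (σf w), φ s w ∈ Ω := by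
      rw [uIcc_of_le hσnn]
      exact fun s hs => hφΩ w hwΩ s hs.1
    have hia : IntervalIntegrable (fun s => p * (h (φ s w)).re) volume 0 (σf w) :=
      (continuousOn_const.mul ((Complex.continuous_re.comp_continuousOn hh).comp
        hcφ hmaps)).intervalIntegrable
    have hib : IntervalIntegrable (fun s => deriv F (φ s w)) volume 0 (σf w) :=
      (hF'c.comp hcφ hmaps).intervalIntegrable
    have hsplit : (∫ s in (0:ℝ)..(σf w), p * (h (φ s w)).re - deriv F (φ s w))
        = p * (∫ s in (0:ℝ)..(σf w), (h (φ s w)).re)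
          - ∫ s in (0:ℝ)..(σf w), deriv F (φ s w) := by
      rw [intervalIntegral.integral_sub hia hib, intervalIntegral.integral_const_mul]
    have hsub1 : (∫ s in (0:ℝ)..(σf w), (h (φ s w)).re)
        = ∫ u in w..x, (h u).re / F u := by
      have := hsubint w hwC (σf w) hσnn
      rwa [hφσ w hw] at this
    have habs1 : Real.exp (∫ s in (0:ℝ)..(σf w), deriv F (φ s w)) = |F x| / |F w| := by
      have := habs w hwC (σf w) hσnn
      rwa [hφσ w hw] at this
    have hfx : |F x| ≠ 0 := abs_ne_zero.2 hFx
    have hfw : |F w| ≠ 0 := abs_ne_zero.2 (hCF w hwC)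
    have hval : ρt (σf w) x
        = Real.exp (p * ∫ u in w..x, (h u).re / F u) * (|F w| / |F x|) * ρ w := by
      rw [hρ, hsplit, hsub1, Real.exp_sub, habs1]
      rw [div_div_eq_mul_div]
      ring
    rw [hval, abs_neg, abs_inv]
    rw [← ENNReal.ofReal_mul (by positivity)]
    congr 1
    have hfwpos : (0:ℝ) < |F w| := abs_pos.2 (hCF w hwC)
    field_simp
  have hPartA : ∫⁻ t in Ici (0:ℝ), ENNReal.ofReal (ρt t x) = ∫⁻ w in Cm, Ψ w := by
    rw [hArw, hSdef,
      lintegral_image_eq_lintegral_abs_deriv_mul' hCm_meas hσderiv hσinj _]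
    exact setLIntegral_congr_fun hCm_meas hApoint
  -- combine the two halves
  have hxCp : x ∈ Cp := ⟨hxC, by rw [hτx]⟩
  have hsplitC : (∫⁻ w in Cm, Ψ w) + ∫⁻ w in Cp, Ψ w = ∫⁻ w in C, Ψ w := by
    have h1 : ∫⁻ w in Cm, Ψ w = ∫⁻ w in Cm \ {x}, Ψ w :=
      (setLIntegral_congr (diff_ae_eq_self.2
        (measure_mono_null inter_subset_right (measure_singleton x)))).symm
    have hdisj : Disjoint (Cm \ {x}) Cp := by
      rw [disjoint_left]
      rintro w ⟨hwm, hwx⟩ hwp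
      refine hwx ?_
      have : τ w = τ x := by rw [hτx]; exact le_antisymm hwm.2 hwp.2
      exact hτinj hwm.1 hxC this
    have hunion : (Cm \ {x}) ∪ Cp = C := by
      ext w
      constructor
      · rintro (⟨hw, -⟩ | hw)
        exacts [hw.1, hw.1]
      · intro hw
        rcases le_total (τ w) 0 with hτw | hτw
        · by_cases hwx : w = x
          · right; rw [hwx]; exact hxCp
          · left; exact ⟨⟨hw, hτw⟩, hwx⟩
        · right; exact ⟨hw, hτw⟩
    rw [h1, ← lintegral_union hCp_meas hdisj, hunion]
  calc ∫⁻ t : ℝ, ENNReal.ofReal (ρt t x)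
      = (∫⁻ t in Iio (0:ℝ), ENNReal.ofReal (ρt t x))
        + ∫⁻ t in Ici (0:ℝ), ENNReal.ofReal (ρt t x) := by
        have := lintegral_add_compl (μ := (volume : Measure ℝ))
          (fun t => ENNReal.ofReal (ρt t x)) (measurableSet_Iio (a := (0:ℝ)))
        rw [compl_Iio] at this
        exact this.symm
    _ = (∫⁻ w in Cp, Ψ w) + ∫⁻ w in Cm, Ψ w := by rw [hPartB, hPartA]
    _ = ∫⁻ w in C, Ψ w := by rw [add_comm (∫⁻ w in Cp, Ψ w)]; exact hsplitC
    _ = ENNReal.ofReal (1 / |F x|) *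
        ∫⁻ w in C, ENNReal.ofReal (Real.exp (p * ∫ y in w..x, (h y).re / F y) * ρ w) := by
        rw [← lintegral_const_mul' _ _ ENNReal.ofReal_ne_top]
        refine setLIntegral_congr_fun hCmeas (fun w hw => ?_)
        simp only [hΨdef]
        rw [ENNReal.ofReal_mul (by positivity)]
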